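/- arXiv:2308.06709 — 2 statements merged into one kernel-verified Lean document; each statement's English description precedes it below -/
import Mathlib

section
/- Under the assumptions of the auxiliary-function construction theorem (Theorem 3.2 of the paper), the piecewise function φ : closure(Ω) → ℝ defined by φ(x) = c³ if x ∈ (closure(Ω⁻) \ U) ∪ (closure(Ω⁻) ∩ L_c); φ(x) = c³ − (c − ψ(x))³ if x ∈ (U ∩ closure(Ω⁻)) \ L_c; φ(x) = 0 if x ∈ closure(Ω⁺), is well-defined (the piecewise definitions agree on all overlap closures) and continuous on closure(Ω). -/
open Set Finset

/-- Pasting lemma: a function continuous on two closed sets is continuous on their union. -/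
lemma continuousOn_union_of_isClosed {X Y : Type*} [TopologicalSpace X] [TopologicalSpace Y]
    {f : X → Y} {s t : Set X} (hs : IsClosed s) (ht : IsClosed t)
    (hfs : ContinuousOn f s) (hft : ContinuousOn f t) : ContinuousOn f (s ∪ t) := by
  intro x hx
  have cs : ContinuousWithinAt f s x := by
    by_cases h : x ∈ s
    · exact hfs x h
    · exact continuousWithinAt_of_notMem_closure (by rwa [hs.closure_eq])
  have ct : ContinuousWithinAt f t x := by
    by_cases h : x ∈ t
    · exact hft x h
    · exact continuousWithinAt_of_notMem_closure (by rwa [ht.closure_eq])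
  exact cs.union ct

/-- The auxiliary function `φ` of Theorem 3.2, defined piecewise by `c³` on
`D₁ = (closure Ω⁻ \ U) ∪ (closure Ω⁻ ∩ L_c)`, by `c³ − (c − ψ)³` on
`D₂ = (U ∩ closure Ω⁻) \ L_c`, and by `0` on `D₃ = closure Ω⁺`, is well-defined
(the pieces agree on all overlap closures) and continuous on `closure Ω`. -/
theorem aux_function_well_defined_continuous {d n : ℕ}
    (Ω Ωm Ωp Γ U : Set (EuclideanSpace ℝ (Fin d)))
    (M : Fin n → Set (EuclideanSpace ℝ (Fin d)))
    (hΩmOpen : IsOpen Ωm) (hΩpOpen : IsOpen Ωp)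
    (hdisj : Disjoint Ωm Ωp)
    (hΩ : Ω = Ωm ∪ Γ ∪ Ωp)
    (hΓ : Γ = closure Ωp ∩ closure Ωm)
    (hUopen : IsOpen U) (hΓU : Γ ⊆ U)
    (ψ' : Fin n → EuclideanSpace ℝ (Fin d) → ℝ)
    (hψ'cont : ∀ i, ContinuousOn (ψ' i) (closure U))
    (c' : Fin n → ℝ) (hc' : ∀ i, 0 < c' i)
    (hψ0 : ∀ i, ∀ x ∈ M i ∩ Γ, ψ' i x = 0)
    (hψpos : ∀ i, ∀ x ∈ U ∩ Ωm, 0 < ψ' i x)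
    (hΓM : ∀ x ∈ Γ, ∃ i, x ∈ M i)
    (hbig : ∀ i, ∀ x ∈ frontier U ∩ closure Ωm, c' i < ψ' i x)
    (c : ℝ) (hc0 : 0 < c) (hcprod : c < ∏ i, c' i)
    (ψ : EuclideanSpace ℝ (Fin d) → ℝ) (hψ : ψ = fun x => ∏ i, ψ' i x)
    (Lc : Set (EuclideanSpace ℝ (Fin d))) (hLc : Lc = {x ∈ U | c ≤ ψ x})
    (D₁ D₂ D₃ : Set (EuclideanSpace ℝ (Fin d)))
    (hD₁ : D₁ = (closure Ωm \ U) ∪ (closure Ωm ∩ Lc))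
    (hD₂ : D₂ = (U ∩ closure Ωm) \ Lc)
    (hD₃ : D₃ = closure Ωp)
    (φ : EuclideanSpace ℝ (Fin d) → ℝ)
    (hφ₁ : ∀ x ∈ D₁, φ x = c ^ 3)
    (hφ₂ : ∀ x ∈ D₂, φ x = c ^ 3 - (c - ψ x) ^ 3)
    (hφ₃ : ∀ x ∈ D₃, φ x = 0) :
    -- well-definedness: the piecewise formulas agree on all overlap closures
    (∀ x ∈ closure D₁ ∩ closure D₂, c ^ 3 = c ^ 3 - (c - ψ x) ^ 3) ∧
    (∀ x ∈ closure D₂ ∩ closure D₃, c ^ 3 - (c - ψ x) ^ 3 = 0) ∧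
    closure D₁ ∩ closure D₃ = ∅ ∧
    -- continuity on closure Ω
    ContinuousOn φ (closure Ω) := by
  -- ψ is continuous on closure U
  have hψcont : ContinuousOn ψ (closure U) := by
    rw [hψ]; exact continuousOn_finset_prod _ fun i _ => hψ'cont i
  -- ψ vanishes on Γ
  have hψΓ : ∀ x ∈ Γ, ψ x = 0 := by
    intro x hx
    obtain ⟨i, hi⟩ := hΓM x hx
    rw [hψ]
    exact Finset.prod_eq_zero (Finset.mem_univ i) (hψ0 i x ⟨hi, hx⟩)
  -- ψ is bigger than c on frontier U ∩ closure Ωm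
  have hψbig : ∀ x ∈ frontier U ∩ closure Ωm, c < ψ x := by
    intro x hx
    have : (∏ i, c' i) ≤ ∏ i, ψ' i x :=
      Finset.prod_le_prod (fun i _ => (hc' i).le) (fun i _ => (hbig i x hx).le)
    rw [hψ]
    exact lt_of_lt_of_le hcprod this
  -- basic set inclusions
  have hLcU : Lc ⊆ U := by rw [hLc]; exact fun x hx => hx.1
  have hD₁sub : D₁ ⊆ closure Ωm := by
    rw [hD₁]; rintro x (hx | hx); exacts [hx.1, hx.1]
  have hD₂sub : D₂ ⊆ closure Ωm := by rw [hD₂]; exact fun x hx => hx.1.2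
  have hD₂U : D₂ ⊆ closure U := by
    rw [hD₂]; exact fun x hx => subset_closure hx.1.1
  have hclD₂Ωm : closure D₂ ⊆ closure Ωm := closure_minimal hD₂sub isClosed_closure
  have hclD₂U : closure D₂ ⊆ closure U := closure_minimal hD₂U isClosed_closure
  -- on closure D₂, ψ ≤ c
  have hle : ∀ x ∈ closure D₂, ψ x ≤ c := by
    have hcl : IsClosed (closure U ∩ ψ ⁻¹' Iic c) :=
      hψcont.preimage_isClosed_of_isClosed isClosed_closure isClosed_Iic
    have hsub : D₂ ⊆ closure U ∩ ψ ⁻¹' Iic c := by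
      intro x hx
      refine ⟨hD₂U hx, ?_⟩
      rw [hD₂] at hx
      have : x ∉ Lc := hx.2
      rw [hLc] at this
      simp only [mem_setOf_eq] at this
      push_neg at this
      exact (this (hx.1.1)).le
    intro x hx
    exact (closure_minimal hsub hcl hx).2
  -- on closure (closure Ωm ∩ Lc) ∩ closure U, ψ ≥ c
  have hge : ∀ x ∈ closure (closure Ωm ∩ Lc), c ≤ ψ x := by
    have hcl : IsClosed (closure U ∩ ψ ⁻¹' Ici c) :=
      hψcont.preimage_isClosed_of_isClosed isClosed_closure isClosed_Ici
    have hsub : closure Ωm ∩ Lc ⊆ closure U ∩ ψ ⁻¹' Ici c := by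
      intro x hx
      have hx2 := hx.2
      rw [hLc] at hx2
      exact ⟨subset_closure hx2.1, hx2.2⟩
    intro x hx
    exact (closure_minimal hsub hcl hx).2
  -- closure of the first piece of D₁ avoids U
  have hclA : closure (closure Ωm \ U) ⊆ Uᶜ := by
    refine closure_minimal ?_ (isClosed_compl_iff.2 hUopen)
    exact fun x hx => hx.2
  -- closure D₁ decomposition
  have hclD₁ : closure D₁ ⊆ closure (closure Ωm \ U) ∪ closure (closure Ωm ∩ Lc) := by
    rw [hD₁, closure_union]
  have hclD₁Ωm : closure D₁ ⊆ closure Ωm :=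
    closure_minimal hD₁sub isClosed_closure
  -- Claim 1: ψ = c on closure D₁ ∩ closure D₂
  have claim1 : ∀ x ∈ closure D₁ ∩ closure D₂, ψ x = c := by
    rintro x ⟨h1, h2⟩
    have hxU : x ∈ U := by
      by_contra hxU
      have hfr : x ∈ frontier U := by
        rw [frontier, hUopen.interior_eq]; exact ⟨hclD₂U h2, hxU⟩
      exact absurd (hle x h2) (not_le.2 (hψbig x ⟨hfr, hclD₂Ωm h2⟩))
    have : x ∈ closure (closure Ωm ∩ Lc) := by
      rcases hclD₁ h1 with h | h
      · exact absurd hxU (hclA h)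
      · exact h
    exact le_antisymm (hle x h2) (hge x this)
  -- Claim: closure D₂ ∩ closure D₃ ⊆ Γ
  have hΓ23 : closure D₂ ∩ closure D₃ ⊆ Γ := by
    intro x hx
    rw [hΓ]
    rw [hD₃] at hx
    exact ⟨(isClosed_closure).closure_subset hx.2, hclD₂Ωm hx.1⟩
  refine ⟨?_, ?_, ?_, ?_⟩
  · intro x hx
    rw [claim1 x hx]
    ring
  · intro x hx
    rw [hψΓ x (hΓ23 hx)]
    ring
  · -- closure D₁ ∩ closure D₃ = ∅
    ext x
    simp only [mem_inter_iff, mem_empty_iff_false, iff_false, not_and]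
    intro h1 h3
    have hxΓ : x ∈ Γ := by
      rw [hΓ, hD₃] at *
      exact ⟨isClosed_closure.closure_subset h3, hclD₁Ωm h1⟩
    have hxU : x ∈ U := hΓU hxΓ
    have hxB : x ∈ closure (closure Ωm ∩ Lc) := by
      rcases hclD₁ h1 with h | h
      · exact absurd hxU (hclA h)
      · exact h
    have := hge x hxB
    rw [hψΓ x hxΓ] at this
    exact absurd this (not_le.2 hc0)
  · -- continuity
    -- closure Ω = closure Ωm ∪ closure Ωp
    have hclΩ : closure Ω = closure Ωm ∪ closure Ωp := by
      apply Set.Subset.antisymm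
      · refine closure_minimal ?_ (isClosed_closure.union isClosed_closure)
        rw [hΩ, hΓ]
        rintro x ((hx | hx) | hx)
        · exact Or.inl (subset_closure hx)
        · exact Or.inr hx.1
        · exact Or.inr (subset_closure hx)
      · apply Set.union_subset <;> apply closure_mono <;> rw [hΩ]
        · exact fun x hx => Or.inl (Or.inl hx)
        · exact fun x hx => Or.inr hx
    -- the smooth model g
    set g : EuclideanSpace ℝ (Fin d) → ℝ := fun x => c ^ 3 - max (c - ψ x) 0 ^ 3 with hg
    have hgcont : ContinuousOn g (closure U) :=
      continuousOn_const.sub (((continuousOn_const.sub hψcont).sup continuousOn_const).pow 3)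
    -- K₁ = closure Ωm \ U, K₂ = closure Ωm ∩ closure U
    have hK₁closed : IsClosed (closure Ωm \ U) :=
      isClosed_closure.sdiff hUopen
    have hK₂closed : IsClosed (closure Ωm ∩ closure U) :=
      isClosed_closure.inter isClosed_closure
    have hK₁D₁ : closure Ωm \ U ⊆ D₁ := by rw [hD₁]; exact fun x hx => Or.inl hx
    have hφK₁ : ContinuousOn φ (closure Ωm \ U) := by
      apply ContinuousOn.congr (continuousOn_const (c := c ^ 3))
      exact fun x hx => hφ₁ x (hK₁D₁ hx)
    have hφK₂ : ContinuousOn φ (closure Ωm ∩ closure U) := by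
      apply ContinuousOn.congr (hgcont.mono (inter_subset_right))
      intro x hx
      by_cases hxU : x ∈ U
      · by_cases hxL : x ∈ Lc
        · have hψx : c ≤ ψ x := by rw [hLc] at hxL; exact hxL.2
          rw [hφ₁ x (by rw [hD₁]; exact Or.inr ⟨hx.1, hxL⟩), hg]
          simp [max_eq_right (by linarith : c - ψ x ≤ 0)]
        · have hψx : ψ x < c := by
            by_contra h
            exact hxL (by rw [hLc]; exact ⟨hxU, le_of_not_gt h⟩)
          rw [hφ₂ x (by rw [hD₂]; exact ⟨⟨hxU, hx.1⟩, hxL⟩), hg]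
          simp [max_eq_left (by linarith : (0:ℝ) ≤ c - ψ x)]
      · have hfr : x ∈ frontier U := by
          rw [frontier, hUopen.interior_eq]; exact ⟨hx.2, hxU⟩
        have hψx : c < ψ x := hψbig x ⟨hfr, hx.1⟩
        rw [hφ₁ x (by rw [hD₁]; exact Or.inl ⟨hx.1, hxU⟩), hg]
        simp [max_eq_right (by linarith : c - ψ x ≤ 0)]
    have hφΩm : ContinuousOn φ (closure Ωm) := by
      have : closure Ωm = (closure Ωm \ U) ∪ (closure Ωm ∩ closure U) := by
        apply Set.Subset.antisymm
        · intro x hx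
          by_cases h : x ∈ U
          · exact Or.inr ⟨hx, subset_closure h⟩
          · exact Or.inl ⟨hx, h⟩
        · rintro x (hx | hx); exacts [hx.1, hx.1]
      rw [this]
      exact continuousOn_union_of_isClosed hK₁closed hK₂closed hφK₁ hφK₂
    have hφΩp : ContinuousOn φ (closure Ωp) := by
      apply ContinuousOn.congr (continuousOn_const (c := (0:ℝ)))
      intro x hx
      exact hφ₃ x (by rwa [hD₃])
    rw [hclΩ]
    exact continuousOn_union_of_isClosed isClosed_closure isClosed_closure hφΩm hφΩp
end

section
/- Let x ∈ Γ be a point where ψᵢ(x) = 0 for at most one index i ∈ {1,…,n}, ψⱼ(x) > 0 for all other j, and ∂_n ψᵢ(x) ≠ 0. Then the jump [β ∂_n φ]_Γ(x) = −3β⁻ c² (∂_n ψᵢ)(x) ∏_{j≠i} ψⱼ(x) ≠ 0, where φ is the auxiliary function of Theorem 3.2. Consequently, [β ∂_n φ]_Γ ≠ 0 on the set of points of Γ lying in exactly one manifold Mᵢ. -/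
open Finset

/-- At a point `x ∈ Γ` lying on exactly one manifold `Mᵢ` (so `ψᵢ(x) = 0`,
`ψⱼ(x) > 0` for `j ≠ i`) with `∂ₙψᵢ(x) ≠ 0`, the flux jump of the auxiliary
function `φ` of Theorem 3.2 equals `−3β⁻c²(∂ₙψᵢ)(x) ∏_{j≠i} ψⱼ(x) ≠ 0`. -/
theorem aux_function_flux_jump_ne_zero {d n : ℕ}
    (Γ U : Set (EuclideanSpace ℝ (Fin d))) (hU : IsOpen U) (hΓU : Γ ⊆ U)
    (βm βp : ℝ) (hβm : 0 < βm) (hβp : 0 < βp)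
    (ψ' : Fin n → EuclideanSpace ℝ (Fin d) → ℝ)
    (hψ' : ∀ i, ContDiffOn ℝ 2 (ψ' i) U)
    (ψ : EuclideanSpace ℝ (Fin d) → ℝ) (hψ : ψ = fun x => ∏ i, ψ' i x)
    (c : ℝ) (hc : 0 < c)
    (x : EuclideanSpace ℝ (Fin d)) (hx : x ∈ Γ)
    (nv : EuclideanSpace ℝ (Fin d))
    (i : Fin n) (hzero : ψ' i x = 0) (hpos : ∀ j, j ≠ i → 0 < ψ' j x)
    (hnormal : fderiv ℝ (ψ' i) x nv ≠ 0) :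
    βp * (0 : ℝ)
        - βm * fderiv ℝ (fun z => c ^ 3 - (c - ψ z) ^ 3) x nv
      = -3 * βm * c ^ 2 * fderiv ℝ (ψ' i) x nv * ∏ j ∈ univ.erase i, ψ' j x ∧
    -3 * βm * c ^ 2 * fderiv ℝ (ψ' i) x nv * ∏ j ∈ univ.erase i, ψ' j x ≠ 0 := by
  have hxU : x ∈ U := hΓU hx
  have hdiff : ∀ k, DifferentiableAt ℝ (ψ' k) x := fun k =>
    (((hψ' k).differentiableOn (by norm_num)).differentiableAt (hU.mem_nhds hxU))
  have hprod : HasFDerivAt ψ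
      (∑ k, (∏ j ∈ univ.erase k, ψ' j x) • fderiv ℝ (ψ' k) x) x := by
    rw [hψ]
    exact HasFDerivAt.finset_prod (fun k _ => (hdiff k).hasFDerivAt)
  have hψx : ψ x = 0 := by
    rw [hψ]; exact Finset.prod_eq_zero (mem_univ i) hzero
  have hEval : fderiv ℝ ψ x nv
      = (∏ j ∈ univ.erase i, ψ' j x) * fderiv ℝ (ψ' i) x nv := by
    rw [hprod.fderiv]
    simp only [ContinuousLinearMap.sum_apply, ContinuousLinearMap.smul_apply,
      smul_eq_mul]
    rw [Finset.sum_eq_single i]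
    · intro k _ hk
      have h0 : ∏ j ∈ univ.erase k, ψ' j x = 0 :=
        Finset.prod_eq_zero (Finset.mem_erase.mpr ⟨Ne.symm hk, mem_univ i⟩) hzero
      simp [h0]
    · simp
  have hg : HasDerivAt (fun t : ℝ => c ^ 3 - (c - t) ^ 3) (3 * c ^ 2) (ψ x) := by
    have h1 : HasDerivAt (fun t : ℝ => c - t) (-1) (ψ x) := by
      simpa using (hasDerivAt_id (ψ x)).const_sub c
    have h3 := (h1.pow 3).const_sub (c ^ 3)
    exact h3.congr_deriv (by rw [hψx]; norm_num)
  have hcomp : HasFDerivAt (fun z => c ^ 3 - (c - ψ z) ^ 3)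
      ((3 * c ^ 2) • fderiv ℝ ψ x) x := by
    have := hg.comp_hasFDerivAt x hprod
    rwa [hprod.fderiv]
  have hEval2 : fderiv ℝ (fun z => c ^ 3 - (c - ψ z) ^ 3) x nv
      = 3 * c ^ 2 * ((∏ j ∈ univ.erase i, ψ' j x) * fderiv ℝ (ψ' i) x nv) := by
    rw [hcomp.fderiv]
    simp [hEval]
  constructor
  · rw [hEval2]; ring
  · have hprodpos : 0 < ∏ j ∈ univ.erase i, ψ' j x :=
      Finset.prod_pos fun j hj => hpos j (Finset.mem_erase.mp hj).1
    exact mul_ne_zero (mul_ne_zero (mul_ne_zero (mul_ne_zero (by norm_num)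
      hβm.ne') (pow_ne_zero 2 hc.ne')) hnormal) hprodpos.ne'
end
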